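/- If sequences (y_n) and (z_n) in DL_d(q) define horofunctions h_y and h_z (as pointwise limits of d(·_n, z) − d(·_n, id)), and there exists an index i with lim_n m_i(y_n) ≠ lim_n m_i(z_n) (as elements of ℤ_{≥0} ∪ {∞}), then h_y ≠ h_z. -/

import Mathlib

open Finset

/-- A vertex of the oriented (q+1)-valent tree `T` underlying Diestel–Leader graphs:
descend `m` edges from the basepoint `o` along its ancestor ray (whose edges all
carry the label `0`), then ascend along the edge labels listed in `w`.
The normalization condition (if `m ≠ 0`, the first label of `w` is not `0`)
makes this representation unique. -/
structure TreeVertex (q : ℕ) where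
  m : ℕ
  w : List (Fin q)
  norm : ∀ a t, m ≠ 0 → w = a :: t → (a : ℕ) ≠ 0

namespace TreeVertex

variable {q : ℕ}

/-- the basepoint `o` of the tree -/
def o (q : ℕ) : TreeVertex q := ⟨0, [], fun _ _ h _ => absurd rfl h⟩

/-- `l v = d(v, o ⋏ v)` -/
def l (v : TreeVertex q) : ℕ := v.w.length

/-- the height function `h = l - m` -/
def h (v : TreeVertex q) : ℤ := (v.l : ℤ) - (v.m : ℤ)

/-- length of the longest common prefix of two lists -/
def cpl : List (Fin q) → List (Fin q) → ℕ
  | a :: s, b :: t => if a = b then cpl s t + 1 else 0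
  | _, _ => 0

/-- `mPair x y = d(x, x ⋏ y)`, the distance from `x` to the greatest common
ancestor of `x` and `y`. -/
def mPair (x y : TreeVertex q) : ℕ :=
  if x.m < y.m then x.l + (y.m - x.m)
  else if y.m < x.m then x.l
  else x.l - cpl x.w y.w

/-- the graph distance in the tree -/
def dist (x y : TreeVertex q) : ℕ := mPair x y + mPair y x

end TreeVertex

/-- The Diestel–Leader graph `DL_d(q)`: `d`-tuples of tree vertices whose heights
sum to `0`. -/
structure DL (d q : ℕ) where
  t : Fin d → TreeVertex q
  hsum : ∑ i, (t i).h = 0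

namespace DL

variable {d q : ℕ}

/-- the basepoint `id` of `DL_d(q)` -/
def id0 (d q : ℕ) : DL d q :=
  ⟨fun _ => TreeVertex.o q, by simp [TreeVertex.h, TreeVertex.o, TreeVertex.l]⟩

/-- the pairwise coordinate `m_i(x,y) = d_i(p_i x, p_i x ⋏ p_i y)` -/
def mm (x y : DL d q) (i : Fin d) : ℕ := TreeVertex.mPair (x.t i) (y.t i)

/-- the pairwise coordinate `l_i(x,y) = d_i(p_i y, p_i x ⋏ p_i y)` -/
def ll (x y : DL d q) (i : Fin d) : ℕ := TreeVertex.mPair (y.t i) (x.t i)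

/-- the coordinate `m_i(x)` -/
def mc (x : DL d q) (i : Fin d) : ℕ := (x.t i).m

/-- the coordinate `l_i(x)` -/
def lc (x : DL d q) (i : Fin d) : ℕ := (x.t i).l

/-- the height coordinate `h_i(x) = l_i(x) - m_i(x)` -/
def hc (x : DL d q) (i : Fin d) : ℤ := (x.t i).h

/-- The Stein–Taback quantity `f_{σ,i}` (here `i` is 1-based, `2 ≤ i ≤ d`):
`f_{σ,i} = m_{σ(1)} + ⋯ + m_{σ(i)} + l_{σ(i)} + ⋯ + l_{σ(d)}` for `2 ≤ i ≤ d-1`,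
and `f_{σ,d} = 2m_{σ(1)} + m_{σ(2)} + ⋯ + m_{σ(d)} + l_{σ(d)}`. -/
def fST {d : ℕ} (m l : Fin d → ℕ) (σ : Equiv.Perm (Fin d)) (i : ℕ) : ℕ :=
  if i = d then
    (∑ j, m (σ j)) + (∑ j ∈ univ.filter fun j : Fin d => (j : ℕ) = 0, m (σ j))
      + (∑ j ∈ univ.filter fun j : Fin d => (j : ℕ) = d - 1, l (σ j))
  else
    (∑ j ∈ univ.filter fun j : Fin d => (j : ℕ) + 1 ≤ i, m (σ j))
      + (∑ j ∈ univ.filter fun j : Fin d => i ≤ (j : ℕ) + 1, l (σ j))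

/-- The distance on `DL_d(q)`, via the Stein–Taback formula
`d(x,y) = min_{σ ∈ Σ_d} max_{2 ≤ i ≤ d} f_{σ,i}(x,y)`. -/
noncomputable def dist (x y : DL d q) : ℕ :=
  ⨅ σ : Equiv.Perm (Fin d), ⨆ i ∈ Finset.Icc 2 d, fST (mm x y) (ll x y) σ i

end DL

open Filter

section Aux

namespace TreeVertex

variable {q : ℕ}

lemma o_m : (o q).m = 0 := rfl
lemma o_w : (o q).w = [] := rfl
lemma o_l : (o q).l = 0 := rfl

lemma cpl_nil_right (w : List (Fin q)) : cpl w ([] : List (Fin q)) = 0 := by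
  cases w <;> rfl

lemma cpl_nil_left (w : List (Fin q)) : cpl ([] : List (Fin q)) w = 0 := by
  cases w <;> rfl

lemma mPair_o_right (a : TreeVertex q) : mPair a (o q) = a.l := by
  unfold mPair
  rw [o_m, o_w, cpl_nil_right]
  split_ifs <;> omega

lemma mPair_o_left (a : TreeVertex q) : mPair (o q) a = a.m := by
  unfold mPair
  rw [o_m, o_w, o_l, cpl_nil_left]
  split_ifs <;> omega

/-- The tree vertex with `m = l = k` used to build the test points. -/
def zetaV (q : ℕ) (hq : 2 ≤ q) (k : ℕ) : TreeVertex q :=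
  ⟨k, List.replicate k ⟨1, by omega⟩, by
    intro a t _ hw
    have ha : a ∈ List.replicate k (⟨1, by omega⟩ : Fin q) := by
      rw [hw]; exact List.mem_cons_self
    rw [List.eq_of_mem_replicate ha]
    exact Nat.one_ne_zero⟩

variable {hq : 2 ≤ q} {k : ℕ}

lemma zetaV_m : (zetaV q hq k).m = k := rfl

lemma zetaV_l : (zetaV q hq k).l = k := by
  simp [zetaV, TreeVertex.l]

lemma zetaV_h : (zetaV q hq k).h = 0 := by
  simp [TreeVertex.h, zetaV_l, zetaV_m]

lemma o_h : (o q).h = 0 := by simp [TreeVertex.h, o_l, o_m]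

lemma succ_le_mPair_zetaV_right (a : TreeVertex q) (h : a.m < k) :
    a.l + 1 ≤ mPair a (zetaV q hq k) := by
  unfold mPair
  rw [zetaV_m]
  split_ifs <;> omega

lemma succ_le_mPair_zetaV_left (a : TreeVertex q) (h : a.m < k) :
    a.m + 1 ≤ mPair (zetaV q hq k) a := by
  unfold mPair
  rw [zetaV_m, zetaV_l]
  split_ifs <;> omega

lemma mPair_zetaV_right_le (a : TreeVertex q) (h : k ≤ a.m) :
    mPair a (zetaV q hq k) ≤ a.l := by
  unfold mPair
  rw [zetaV_m]
  split_ifs <;> omega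

lemma mPair_zetaV_left_le (a : TreeVertex q) (h : k ≤ a.m) :
    mPair (zetaV q hq k) a ≤ a.m := by
  unfold mPair
  rw [zetaV_m, zetaV_l]
  split_ifs <;> omega

end TreeVertex

namespace DL

variable {d q : ℕ}

/-- The test point `ζ^i_k`. -/
def zeta (d q : ℕ) (hq : 2 ≤ q) (i : Fin d) (k : ℕ) : DL d q :=
  ⟨fun j => if j = i then TreeVertex.zetaV q hq k else TreeVertex.o q, by
    apply Finset.sum_eq_zero
    intro j _
    by_cases h : j = i <;> simp [h, TreeVertex.zetaV_h, TreeVertex.o_h]⟩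

lemma mm_id (x : DL d q) (t : Fin d) : mm x (id0 d q) t = (x.t t).l :=
  TreeVertex.mPair_o_right _

lemma ll_id (x : DL d q) (t : Fin d) : ll x (id0 d q) t = (x.t t).m :=
  TreeVertex.mPair_o_left _

lemma zeta_t_eq {hq : 2 ≤ q} {i : Fin d} {k : ℕ} :
    (zeta d q hq i k).t i = TreeVertex.zetaV q hq k := by
  simp [zeta]

lemma zeta_t_ne {hq : 2 ≤ q} {i : Fin d} {k : ℕ} {t : Fin d} (h : t ≠ i) :
    (zeta d q hq i k).t t = TreeVertex.o q := by
  simp [zeta, h]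

lemma mm_zeta_eq (x : DL d q) {hq : 2 ≤ q} {i : Fin d} {k : ℕ} :
    mm x (zeta d q hq i k) i = TreeVertex.mPair (x.t i) (TreeVertex.zetaV q hq k) := by
  unfold mm
  rw [zeta_t_eq]

lemma mm_zeta_ne (x : DL d q) {hq : 2 ≤ q} {i : Fin d} {k : ℕ} {t : Fin d} (h : t ≠ i) :
    mm x (zeta d q hq i k) t = (x.t t).l := by
  unfold mm
  rw [zeta_t_ne h, TreeVertex.mPair_o_right]

lemma ll_zeta_eq (x : DL d q) {hq : 2 ≤ q} {i : Fin d} {k : ℕ} :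
    ll x (zeta d q hq i k) i = TreeVertex.mPair (TreeVertex.zetaV q hq k) (x.t i) := by
  unfold ll
  rw [zeta_t_eq]

lemma ll_zeta_ne (x : DL d q) {hq : 2 ≤ q} {i : Fin d} {k : ℕ} {t : Fin d} (h : t ≠ i) :
    ll x (zeta d q hq i k) t = (x.t t).m := by
  unfold ll
  rw [zeta_t_ne h, TreeVertex.mPair_o_left]

lemma fST_mono {m m' l l' : Fin d → ℕ} (hm : ∀ t, m t ≤ m' t) (hl : ∀ t, l t ≤ l' t)
    (σ : Equiv.Perm (Fin d)) (j : ℕ) : fST m l σ j ≤ fST m' l' σ j := by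
  unfold fST
  split_ifs
  · exact add_le_add (add_le_add (Finset.sum_le_sum fun t _ => hm _)
      (Finset.sum_le_sum fun t _ => hm _)) (Finset.sum_le_sum fun t _ => hl _)
  · exact add_le_add (Finset.sum_le_sum fun t _ => hm _) (Finset.sum_le_sum fun t _ => hl _)

private lemma sum_succ_le {m m' : Fin d → ℕ} {i : Fin d} (hm : ∀ t, m t ≤ m' t)
    (hmi : m i + 1 ≤ m' i) (σ : Equiv.Perm (Fin d)) {S : Finset (Fin d)}
    (hS : σ.symm i ∈ S) : (∑ j ∈ S, m (σ j)) + 1 ≤ ∑ j ∈ S, m' (σ j) :=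
  Nat.succ_le_of_lt <| Finset.sum_lt_sum (fun t _ => hm _)
    ⟨σ.symm i, hS, by simpa using Nat.lt_of_succ_le hmi⟩

lemma fST_succ_le {m m' l l' : Fin d → ℕ} (i : Fin d) (hm : ∀ t, m t ≤ m' t)
    (hl : ∀ t, l t ≤ l' t) (hmi : m i + 1 ≤ m' i) (hli : l i + 1 ≤ l' i)
    (σ : Equiv.Perm (Fin d)) (j : ℕ) : fST m l σ j + 1 ≤ fST m' l' σ j := by
  unfold fST
  split_ifs with hjd
  · have h1 := sum_succ_le hm hmi σ (Finset.mem_univ (σ.symm i))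
    have h2 : (∑ t ∈ Finset.univ.filter fun t : Fin d => (t : ℕ) = 0, m (σ t))
        ≤ ∑ t ∈ Finset.univ.filter fun t : Fin d => (t : ℕ) = 0, m' (σ t) :=
      Finset.sum_le_sum fun t _ => hm _
    have h3 : (∑ t ∈ Finset.univ.filter fun t : Fin d => (t : ℕ) = d - 1, l (σ t))
        ≤ ∑ t ∈ Finset.univ.filter fun t : Fin d => (t : ℕ) = d - 1, l' (σ t) :=
      Finset.sum_le_sum fun t _ => hl _
    omega
  · rcases le_total ((σ.symm i : ℕ) + 1) j with h | h
    · have h1 := sum_succ_le hm hmi σ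
        (S := Finset.univ.filter fun t : Fin d => (t : ℕ) + 1 ≤ j)
        (Finset.mem_filter.2 ⟨Finset.mem_univ _, h⟩)
      have h2 : (∑ t ∈ Finset.univ.filter fun t : Fin d => j ≤ (t : ℕ) + 1, l (σ t))
          ≤ ∑ t ∈ Finset.univ.filter fun t : Fin d => j ≤ (t : ℕ) + 1, l' (σ t) :=
        Finset.sum_le_sum fun t _ => hl _
      omega
    · have h1 := sum_succ_le hl hli σ
        (S := Finset.univ.filter fun t : Fin d => j ≤ (t : ℕ) + 1)
        (Finset.mem_filter.2 ⟨Finset.mem_univ _, h⟩)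
      have h2 : (∑ t ∈ Finset.univ.filter fun t : Fin d => (t : ℕ) + 1 ≤ j, m (σ t))
          ≤ ∑ t ∈ Finset.univ.filter fun t : Fin d => (t : ℕ) + 1 ≤ j, m' (σ t) :=
        Finset.sum_le_sum fun t _ => hm _
      omega

lemma biSup_eq_sup (s : Finset ℕ) (f : ℕ → ℕ) : ⨆ j ∈ s, f j = s.sup f := by
  have key : ∀ j : ℕ, (⨆ (_ : j ∈ s), f j) ≤ s.sup f := by
    intro j
    by_cases h : j ∈ s
    · haveI : Nonempty (j ∈ s) := ⟨h⟩
      rw [ciSup_const]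
      exact Finset.le_sup h
    · haveI : IsEmpty (j ∈ s) := ⟨h⟩
      rw [ciSup_of_empty]
      exact bot_le
  apply le_antisymm
  · exact ciSup_le key
  · apply Finset.sup_le
    intro j hj
    haveI : Nonempty (j ∈ s) := ⟨hj⟩
    calc f j = ⨆ (_ : j ∈ s), f j := ciSup_const.symm
      _ ≤ ⨆ j ∈ s, f j := le_ciSup ⟨s.sup f, by rintro _ ⟨j', rfl⟩; exact key j'⟩ j

lemma dist_eq (x y : DL d q) :
    DL.dist x y = ⨅ σ : Equiv.Perm (Fin d), (Finset.Icc 2 d).sup (fST (mm x y) (ll x y) σ) := by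
  unfold DL.dist
  exact iInf_congr fun σ => biSup_eq_sup _ _

lemma dist_le_dist {x y y' : DL d q} (hm : ∀ t, mm x y' t ≤ mm x y t)
    (hl : ∀ t, ll x y' t ≤ ll x y t) : DL.dist x y' ≤ DL.dist x y := by
  rw [dist_eq, dist_eq]
  refine ciInf_mono (OrderBot.bddBelow _) fun σ => ?_
  exact Finset.sup_mono_fun fun j _ => fST_mono hm hl σ j

lemma dist_succ_le (hd : 2 ≤ d) {x y y' : DL d q} (i : Fin d)
    (hm : ∀ t, mm x y t ≤ mm x y' t) (hl : ∀ t, ll x y t ≤ ll x y' t)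
    (hmi : mm x y i + 1 ≤ mm x y' i) (hli : ll x y i + 1 ≤ ll x y' i) :
    DL.dist x y + 1 ≤ DL.dist x y' := by
  rw [dist_eq, dist_eq]
  refine le_ciInf fun σ => ?_
  have h1 : (⨅ σ' : Equiv.Perm (Fin d), (Finset.Icc 2 d).sup (fST (mm x y) (ll x y) σ'))
      ≤ (Finset.Icc 2 d).sup (fST (mm x y) (ll x y) σ) :=
    ciInf_le (OrderBot.bddBelow _) σ
  have hne : (Finset.Icc 2 d).Nonempty := ⟨2, Finset.mem_Icc.2 ⟨le_refl 2, hd⟩⟩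
  obtain ⟨j₀, hj₀, hsup⟩ := Finset.exists_mem_eq_sup _ hne (fST (mm x y) (ll x y) σ)
  have h2 := fST_succ_le i hm hl hmi hli σ j₀
  have h3 : fST (mm x y') (ll x y') σ j₀ ≤ (Finset.Icc 2 d).sup (fST (mm x y') (ll x y') σ) :=
    Finset.le_sup hj₀
  omega

end DL

/-- Key lemma: the one-sided version of the theorem. -/
lemma horofns_ne_key {d q : ℕ} (hd : 2 ≤ d) (hq : 2 ≤ q)
    (y z : ℕ → DL d q) (hy hz : DL d q → ℤ)
    (hyconv : ∀ w, Filter.Tendsto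
      (fun n => (DL.dist (y n) w : ℤ) - (DL.dist (y n) (DL.id0 d q) : ℤ))
      Filter.atTop (nhds (hy w)))
    (hzconv : ∀ w, Filter.Tendsto
      (fun n => (DL.dist (z n) w : ℤ) - (DL.dist (z n) (DL.id0 d q) : ℤ))
      Filter.atTop (nhds (hz w)))
    (i : Fin d) (Ly Lz : ℕ∞)
    (hLy : Filter.Tendsto (fun n => (DL.mc (y n) i : ℕ∞)) Filter.atTop (nhds Ly))
    (hLz : Filter.Tendsto (fun n => (DL.mc (z n) i : ℕ∞)) Filter.atTop (nhds Lz))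
    (hlt : Ly < Lz) : hy ≠ hz := by
  intro heq
  lift Ly to ℕ using hlt.ne_top with K
  have hev1 : ∀ᶠ n in Filter.atTop, DL.mc (y n) i < K + 1 := by
    have hKlt : (K : ℕ∞) < ((K + 1 : ℕ) : ℕ∞) := by exact_mod_cast Nat.lt_succ_self K
    filter_upwards [hLy.eventually_lt_const hKlt] with n hn
    exact_mod_cast hn
  have hev2 : ∀ᶠ n in Filter.atTop, K + 1 ≤ DL.mc (z n) i := by
    filter_upwards [hLz.eventually_const_lt hlt] with n hn
    have h' : K < DL.mc (z n) i := by exact_mod_cast hn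
    omega
  have hyb : 1 ≤ hy (DL.zeta d q hq i (K + 1)) := by
    refine ge_of_tendsto (hyconv _) ?_
    filter_upwards [hev1] with n hn
    have hn' : ((y n).t i).m < K + 1 := hn
    have hstep : DL.dist (y n) (DL.id0 d q) + 1 ≤ DL.dist (y n) (DL.zeta d q hq i (K + 1)) := by
      refine DL.dist_succ_le hd i ?_ ?_ ?_ ?_
      · intro t
        by_cases ht : t = i
        · subst ht
          rw [DL.mm_id, DL.mm_zeta_eq]
          have := TreeVertex.succ_le_mPair_zetaV_right (hq := hq) ((y n).t t) hn'
          omega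
        · rw [DL.mm_id, DL.mm_zeta_ne _ ht]
      · intro t
        by_cases ht : t = i
        · subst ht
          rw [DL.ll_id, DL.ll_zeta_eq]
          have := TreeVertex.succ_le_mPair_zetaV_left (hq := hq) ((y n).t t) hn'
          omega
        · rw [DL.ll_id, DL.ll_zeta_ne _ ht]
      · rw [DL.mm_id, DL.mm_zeta_eq]
        exact TreeVertex.succ_le_mPair_zetaV_right _ hn'
      · rw [DL.ll_id, DL.ll_zeta_eq]
        exact TreeVertex.succ_le_mPair_zetaV_left _ hn'
    omega
  have hzb : hz (DL.zeta d q hq i (K + 1)) ≤ 0 := by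
    refine le_of_tendsto (hzconv _) ?_
    filter_upwards [hev2] with n hn
    have hn' : K + 1 ≤ ((z n).t i).m := hn
    have hstep : DL.dist (z n) (DL.zeta d q hq i (K + 1)) ≤ DL.dist (z n) (DL.id0 d q) := by
      refine DL.dist_le_dist ?_ ?_
      · intro t
        by_cases ht : t = i
        · subst ht
          rw [DL.mm_id, DL.mm_zeta_eq]
          exact TreeVertex.mPair_zetaV_right_le _ hn'
        · rw [DL.mm_id, DL.mm_zeta_ne _ ht]
      · intro t
        by_cases ht : t = i
        · subst ht
          rw [DL.ll_id, DL.ll_zeta_eq]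
          exact TreeVertex.mPair_zetaV_left_le _ hn'
        · rw [DL.ll_id, DL.ll_zeta_ne _ ht]
    omega
  rw [heq] at hyb
  omega

end Aux

/-- **$m_i$-invariance.** If sequences `(y n)` and `(z n)` in
`DL_d(q)` define horofunctions `hy` and `hz` (as pointwise limits of
`d(·_n, w) - d(·_n, id)`, not realized by points of the graph), and there is an
index `i` with `lim_n m_i(y n) ≠ lim_n m_i(z n)` (as elements of
`ℤ_{≥0} ∪ {∞} = ℕ∞`), then `hy ≠ hz`. -/
theorem horofns_ne_of_mcoord_lim_ne {d q : ℕ} (hd : 2 ≤ d) (hq : 2 ≤ q)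
    (y z : ℕ → DL d q) (hy hz : DL d q → ℤ)
    (hyconv : ∀ w, Tendsto (fun n => (DL.dist (y n) w : ℤ) - (DL.dist (y n) (DL.id0 d q) : ℤ))
      atTop (nhds (hy w)))
    (hzconv : ∀ w, Tendsto (fun n => (DL.dist (z n) w : ℤ) - (DL.dist (z n) (DL.id0 d q) : ℤ))
      atTop (nhds (hz w)))
    (hyhoro : ∀ v : DL d q, hy ≠ fun w => (DL.dist v w : ℤ) - (DL.dist v (DL.id0 d q) : ℤ))
    (hzhoro : ∀ v : DL d q, hz ≠ fun w => (DL.dist v w : ℤ) - (DL.dist v (DL.id0 d q) : ℤ))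
    (i : Fin d) (Ly Lz : ℕ∞)
    (hLy : Tendsto (fun n => (DL.mc (y n) i : ℕ∞)) atTop (nhds Ly))
    (hLz : Tendsto (fun n => (DL.mc (z n) i : ℕ∞)) atTop (nhds Lz))
    (hne : Ly ≠ Lz) :
    hy ≠ hz := by
  rcases hne.lt_or_gt with h | h
  · exact horofns_ne_key hd hq y z hy hz hyconv hzconv i Ly Lz hLy hLz h
  · exact (horofns_ne_key hd hq z y hz hy hzconv hyconv i Lz Ly hLz hLy h).symm
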